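/- arXiv:1104.2802 — 8 statements merged into one kernel-verified Lean document; each statement's English description precedes it below -/
import Mathlib

section
/- Let M : ℝ → ℝ be an even, convex, C¹ function with M(0) = 0, M'(0) = 0, and M' concave on [0,∞). Then for every α ≥ 1 and t ≥ 0, M(αt) ≤ α² M(t). -/
theorem stmt_2 (M : ℝ → ℝ)
    (heven : ∀ t : ℝ, M (-t) = M t)
    (hconv : ConvexOn ℝ Set.univ M)
    (hC1 : ContDiff ℝ 1 M)
    (hM0 : M 0 = 0)
    (hM'0 : deriv M 0 = 0)
    (hconc : ConcaveOn ℝ (Set.Ici 0) (deriv M)) :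
    ∀ α ≥ (1:ℝ), ∀ t ≥ (0:ℝ), M (α * t) ≤ α ^ 2 * M t := by
  intro α hα t ht
  have hα0 : (0:ℝ) < α := lt_of_lt_of_le one_pos hα
  have hMdiff : Differentiable ℝ M := hC1.differentiable one_ne_zero
  -- key inequality from concavity of deriv M
  have hkey : ∀ s : ℝ, 0 ≤ s → deriv M (α * s) ≤ α * deriv M s := by
    intro s hs
    have ha : (0:ℝ) ≤ 1/α := by positivity
    have hb : (0:ℝ) ≤ 1 - 1/α := by
      have : 1/α ≤ 1 := by
        rw [div_le_one hα0]; exact hα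
      linarith
    have hab : (1/α) + (1 - 1/α) = 1 := by ring
    have hx : α * s ∈ Set.Ici (0:ℝ) := Set.mem_Ici.mpr (mul_nonneg hα0.le hs)
    have hy : (0:ℝ) ∈ Set.Ici (0:ℝ) := Set.mem_Ici.mpr le_rfl
    have h := hconc.2 hx hy ha hb hab
    have hpt : (1/α) • (α * s) + (1 - 1/α) • (0:ℝ) = s := by
      field_simp
      simp [hα0.ne']
    rw [hpt, smul_eq_mul, smul_eq_mul, hM'0, mul_zero, add_zero] at h
    -- h : 1/α * deriv M (α * s) ≤ deriv M s
    calc deriv M (α * s) = α * (1/α * deriv M (α * s)) := by field_simp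
      _ ≤ α * deriv M s := by
          exact mul_le_mul_of_nonneg_left h (le_of_lt hα0)
  set g : ℝ → ℝ := fun x => α ^ 2 * M x - M (α * x) with hg
  have hgd : ∀ x : ℝ, HasDerivAt g (α ^ 2 * deriv M x - deriv M (α * x) * α) x := by
    intro x
    have h1 : HasDerivAt (fun y : ℝ => α * y) α x := by
      simpa using (hasDerivAt_id x).const_mul α
    have h2 : HasDerivAt (fun y : ℝ => M (α * y)) (deriv M (α * x) * α) x :=
      HasDerivAt.comp x (hMdiff (α * x)).hasDerivAt h1
    exact ((hMdiff x).hasDerivAt.const_mul (α ^ 2)).sub h2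
  have hmono : MonotoneOn g (Set.Ici 0) := by
    apply monotoneOn_of_deriv_nonneg (convex_Ici 0)
    · exact Continuous.continuousOn (by
        fun_prop)
    · intro x _
      exact ((hgd x).differentiableAt).differentiableWithinAt
    · intro x hx
      rw [(hgd x).deriv]
      have hx0 : (0:ℝ) ≤ x := le_of_lt (by simpa [interior_Ici] using hx)
      have := hkey x hx0
      nlinarith [this, sq_nonneg α]
  have h0 : g 0 ≤ g t := hmono (Set.self_mem_Ici) ht ht
  have hg0 : g 0 = 0 := by simp [hg, hM0]
  have : 0 ≤ g t := by rw [← hg0]; exact h0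
  simp only [hg] at this
  linarith
end

section
/- Let M : ℝ → ℝ be an even, convex, twice continuously differentiable function on (0,∞), with M(0)=0, M'(0)=0, M' concave on [0,∞), and M'' nonnegative and nonincreasing on (0,∞). Then for all t ≥ 0, M(t) ≥ (1/3) t² M''(t). -/
theorem stmt_3 (M : ℝ → ℝ)
    (heven : ∀ t : ℝ, M (-t) = M t)
    (hconv : ConvexOn ℝ Set.univ M)
    (hC2 : ContDiffOn ℝ 2 M (Set.Ioi 0))
    (hM0 : M 0 = 0)
    (hM'0 : deriv M 0 = 0)
    (hconc : ConcaveOn ℝ (Set.Ici 0) (deriv M))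
    (hM''nonneg : ∀ t ∈ Set.Ioi (0:ℝ), 0 ≤ deriv (deriv M) t)
    (hM''anti : AntitoneOn (deriv (deriv M)) (Set.Ioi 0)) :
    ∀ t ≥ (0:ℝ), M t ≥ (1/3) * t ^ 2 * deriv (deriv M) t := by
  -- differentiability of M on Ioi 0
  have hdM : ∀ x ∈ Set.Ioi (0:ℝ), DifferentiableAt ℝ M x := fun x hx =>
    (hC2.differentiableOn (by norm_num)).differentiableAt (isOpen_Ioi.mem_nhds hx)
  -- differentiability of deriv M on Ioi 0
  have hdM' : ∀ x ∈ Set.Ioi (0:ℝ), DifferentiableAt ℝ (deriv M) x := fun x hx =>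
    (((hC2.deriv_of_isOpen (m := 1) isOpen_Ioi (by norm_num)).differentiableOn (by norm_num))).differentiableAt
      (isOpen_Ioi.mem_nhds hx)
  -- nonnegativity of M on [0, ∞)
  have hMnonneg : ∀ s : ℝ, 0 ≤ M s := by
    intro s
    have := hconv.2 (Set.mem_univ s) (Set.mem_univ (-s))
      (by norm_num : (0:ℝ) ≤ 1/2) (by norm_num : (0:ℝ) ≤ 1/2) (by norm_num)
    simp only [smul_eq_mul, heven] at this
    have h0 : (1/2 : ℝ) * s + (1/2) * (-s) = 0 := by ring
    rw [h0, hM0] at this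
    linarith
  intro t ht
  rcases eq_or_lt_of_le ht with rfl | ht
  · norm_num [hM0]
  set a : ℝ := t/3 with ha_def
  set b : ℝ := 2*t/3 with hb_def
  have ha : a ∈ Set.Ioi (0:ℝ) := by simp [ha_def]; linarith
  have hb : b ∈ Set.Ioi (0:ℝ) := by simp [hb_def]; linarith
  have htI : t ∈ Set.Ioi (0:ℝ) := ht
  have habt : a < b := by simp [ha_def, hb_def]; linarith
  have hbt : b < t := by simp [hb_def]; linarith
  -- tangent inequalities from convexity
  have h1 : deriv M b ≤ (M t - M b) / (t - b) := by
    have := hconv.deriv_le_slope (Set.mem_univ b) (Set.mem_univ t) hbt (hdM b hb)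
    rwa [slope_def_field] at this
  have h2 : deriv M a ≤ (M b - M a) / (b - a) := by
    have := hconv.deriv_le_slope (Set.mem_univ a) (Set.mem_univ b) habt (hdM a ha)
    rwa [slope_def_field] at this
  have h1' : deriv M b * (t - b) ≤ M t - M b :=
    (le_div_iff₀ (by linarith)).mp h1
  have h2' : deriv M a * (b - a) ≤ M b - M a :=
    (le_div_iff₀ (by linarith)).mp h2
  -- concavity of deriv M : deriv M (λ t) ≥ λ deriv M t
  have hconcval : ∀ lam : ℝ, 0 ≤ lam → lam ≤ 1 →
      lam * deriv M t ≤ deriv M (lam * t) := by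
    intro lam h0 h1
    have := hconc.2 (Set.self_mem_Ici (a := (0:ℝ))) (Set.mem_Ici.mpr (le_of_lt ht))
      (by linarith : (0:ℝ) ≤ 1 - lam) h0 (by ring)
    simp only [smul_eq_mul, hM'0, mul_zero, zero_add] at this
    convert this using 2 <;> ring
  have h4 : (1/3 : ℝ) * deriv M t ≤ deriv M a := by
    have := hconcval (1/3) (by norm_num) (by norm_num)
    convert this using 2
    rw [ha_def]; ring
  have h5 : (2/3 : ℝ) * deriv M t ≤ deriv M b := by
    have := hconcval (2/3) (by norm_num) (by norm_num)
    convert this using 2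
    rw [hb_def]; ring
  -- second derivative bound: deriv (deriv M) t ≤ deriv M t / t
  have h6 : deriv (deriv M) t ≤ (deriv M t - deriv M 0) / (t - 0) := by
    have := hconc.deriv_le_slope (Set.self_mem_Ici (a := (0:ℝ)))
      (Set.mem_Ici.mpr (le_of_lt ht)) ht (hdM' t htI)
    rwa [slope_def_field] at this
  rw [hM'0, sub_zero, sub_zero] at h6
  have h6' : deriv (deriv M) t * t ≤ deriv M t := (le_div_iff₀ ht).mp h6
  have h3 : 0 ≤ M a := hMnonneg a
  have hba : b - a = t/3 := by rw [ha_def, hb_def]; ring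
  have htb : t - b = t/3 := by rw [hb_def]; ring
  rw [hba] at h2'
  rw [htb] at h1'
  nlinarith [mul_pos ht ht, mul_le_mul_of_nonneg_left h6' (by linarith : (0:ℝ) ≤ t/3)]
end

section
/- Let M(t) = ∫₀^{|t|} φ(u)(|t|-u) du where φ(u) = 2 for 0 ≤ u ≤ 1 and φ(u) = 8/(1+u)² for u > 1. Then for all a, b ∈ ℝ, setting c = max(|a|,|b|), one has (1/4)·M''(c)·(a-b)² ≤ M(a) + M(b) - 2·M((a+b)/2). -/
noncomputable def phi (u : ℝ) : ℝ := if u ≤ 1 then 2 else 8 / (1 + u) ^ 2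

noncomputable def M (t : ℝ) : ℝ := ∫ u in (0:ℝ)..|t|, phi u * (|t| - u)

open intervalIntegral Set

lemma phi_abs_eq (u : ℝ) : phi |u| = if |u| ≤ 1 then 2 else 8 / (1 + |u|) ^ 2 := rfl

lemma phi_abs_cont : Continuous (fun u : ℝ => phi |u|) := by
  have : (fun u : ℝ => phi |u|) =
      fun u : ℝ => if |u| ≤ 1 then (2:ℝ) else 8 / (1 + |u|) ^ 2 := rfl
  rw [this]
  apply Continuous.if_le
  · exact continuous_const
  · apply Continuous.div continuous_const
    · continuity
    · intro x; positivity
  · exact continuous_abs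
  · exact continuous_const
  · intro x hx
    rw [hx]; norm_num

lemma phi_anti {x y : ℝ} (hx : 0 ≤ x) (hxy : x ≤ y) : phi y ≤ phi x := by
  unfold phi
  split_ifs with h1 h2 h2
  · exact le_refl 2
  · exact (h2 (hxy.trans h1)).elim
  · have hy1 : 1 < y := not_le.mp h1
    rw [div_le_iff₀ (by positivity)]
    nlinarith
  · have hx1 : 1 < x := not_le.mp h2
    have hy1 : 1 < y := not_le.mp h1
    rw [div_le_div_iff₀ (by positivity) (by positivity)]
    nlinarith

noncomputable def Aint (t : ℝ) : ℝ := ∫ u in (0:ℝ)..t, phi |u|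
noncomputable def Bint (t : ℝ) : ℝ := ∫ u in (0:ℝ)..t, u * phi |u|

lemma hasDerivAt_Aint (t : ℝ) : HasDerivAt Aint (phi |t|) t := by
  exact integral_hasDerivAt_right (phi_abs_cont.intervalIntegrable _ _)
    (phi_abs_cont.stronglyMeasurableAtFilter _ _) phi_abs_cont.continuousAt

lemma hasDerivAt_Bint (t : ℝ) : HasDerivAt Bint (t * phi |t|) t := by
  have hc : Continuous fun u : ℝ => u * phi |u| := continuous_id.mul phi_abs_cont
  exact integral_hasDerivAt_right (hc.intervalIntegrable _ _)
    (hc.stronglyMeasurableAtFilter _ _) hc.continuousAt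

lemma M_eq (t : ℝ) : M t = t * Aint t - Bint t := by
  rcases le_or_gt 0 t with ht | ht
  · have habs : |t| = t := abs_of_nonneg ht
    unfold M Aint Bint
    rw [habs]
    have h1 : (∫ u in (0:ℝ)..t, phi u * (t - u)) =
        ∫ u in (0:ℝ)..t, (t * phi |u| - u * phi |u|) := by
      apply integral_congr
      intro u hu
      rw [uIcc_of_le ht] at hu
      have : |u| = u := abs_of_nonneg hu.1
      simp only [this]; ring
    rw [h1, integral_sub, integral_const_mul]
    · exact (phi_abs_cont.intervalIntegrable _ _).const_mul t
    · exact (continuous_id.mul phi_abs_cont).intervalIntegrable _ _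
  · have habs : |t| = -t := abs_of_neg ht
    unfold M Aint Bint
    rw [habs]
    have hA : (∫ u in (0:ℝ)..t, phi |u|) = -∫ u in (0:ℝ)..(-t), phi |u| := by
      have h2 := intervalIntegral.integral_comp_neg (a := (0:ℝ)) (b := -t)
        (f := fun u => phi |u|)
      simp only [abs_neg, neg_neg, neg_zero] at h2
      have h4 : (∫ x in t..(0:ℝ), phi |x|) = -∫ x in (0:ℝ)..t, phi |x| :=
        intervalIntegral.integral_symm 0 t
      linarith
    have hB : (∫ u in (0:ℝ)..t, u * phi |u|) = ∫ u in (0:ℝ)..(-t), u * phi |u| := by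
      have h2 := intervalIntegral.integral_comp_neg (a := (0:ℝ)) (b := -t)
        (f := fun u => u * phi |u|)
      simp only [abs_neg, neg_neg, neg_zero] at h2
      have h3 : (∫ x in (0:ℝ)..(-t), -(x * phi |x|)) = ∫ x in t..0, x * phi |x| := by
        rw [← h2]; apply integral_congr; intro u hu; ring
      rw [intervalIntegral.integral_neg] at h3
      have h4 : (∫ x in t..(0:ℝ), x * phi |x|) = -∫ x in (0:ℝ)..t, x * phi |x| :=
        intervalIntegral.integral_symm 0 t
      linarith
    have h1 : (∫ u in (0:ℝ)..(-t), phi u * (-t - u)) =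
        ∫ u in (0:ℝ)..(-t), ((-t) * phi |u| - u * phi |u|) := by
      apply integral_congr
      intro u hu
      rw [uIcc_of_le (by linarith)] at hu
      have : |u| = u := abs_of_nonneg hu.1
      simp only [this]; ring
    rw [h1, integral_sub, integral_const_mul, hA, hB]
    · ring
    · exact ((phi_abs_cont.intervalIntegrable _ _).const_mul _)
    · exact (continuous_id.mul phi_abs_cont).intervalIntegrable _ _

lemma hasDerivAt_M (t : ℝ) : HasDerivAt M (Aint t) t := by
  have : HasDerivAt (fun t => t * Aint t - Bint t)
      (1 * Aint t + t * phi |t| - t * phi |t|) t :=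
    ((hasDerivAt_id t).mul (hasDerivAt_Aint t)).sub (hasDerivAt_Bint t)
  have h2 : (fun t => t * Aint t - Bint t) = M := by
    funext s; rw [M_eq s]
  rw [h2] at this
  convert this using 1; ring

theorem stmt_4 (a b : ℝ) :
    (1/4) * phi (max |a| |b|) * (a - b) ^ 2 ≤ M a + M b - 2 * M ((a + b) / 2) := by
  set c := max |a| |b| with hc
  set m := phi c with hm
  -- g = M - m/2 * t^2 is convex on Icc (-c) c
  set g : ℝ → ℝ := fun t => M t - m / 2 * t ^ 2 with hg
  have hderivg : ∀ t : ℝ, HasDerivAt g (Aint t - m * t) t := by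
    intro t
    have := (hasDerivAt_M t).sub
      (((hasDerivAt_pow 2 t)).const_mul (m / 2))
    convert this using 1
    all_goals first | rfl | (push_cast; ring)
  have hderivg' : deriv g = fun t => Aint t - m * t := by
    funext t; exact (hderivg t).deriv
  have hderiv2 : ∀ t : ℝ, HasDerivAt (deriv g) (phi |t| - m) t := by
    intro t
    rw [hderivg']
    have h := (hasDerivAt_Aint t).sub ((hasDerivAt_id t).const_mul m)
    convert h using 1
    all_goals first | rfl | ring
  have hconv : ConvexOn ℝ (Icc (-c) c) g := by
    apply convexOn_of_deriv2_nonneg (convex_Icc _ _)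
    · exact fun t _ => ((hderivg t).continuousAt).continuousWithinAt
    · exact fun t _ => ((hderivg t).differentiableAt).differentiableWithinAt
    · exact fun t _ => ((hderiv2 t).differentiableAt).differentiableWithinAt
    · intro x hx
      rw [interior_Icc] at hx
      have hxc : |x| ≤ c := by
        rw [abs_le]; exact ⟨hx.1.le, hx.2.le⟩
      have : deriv^[2] g x = phi |x| - m := by
        simp only [Function.iterate_succ, Function.iterate_zero, Function.comp_apply, id]
        rw [show deriv (deriv g) x = phi |x| - m from (hderiv2 x).deriv]
      rw [this, sub_nonneg, hm]
      exact phi_anti (abs_nonneg x) hxc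
  have hca : |a| ≤ c := le_max_left _ _
  have hcb : |b| ≤ c := le_max_right _ _
  have hain : a ∈ Icc (-c) c := by rw [mem_Icc, ← abs_le]; exact hca
  have hbin : b ∈ Icc (-c) c := by rw [mem_Icc, ← abs_le]; exact hcb
  have key := hconv.2 hain hbin (by norm_num : (0:ℝ) ≤ 1/2)
    (by norm_num : (0:ℝ) ≤ 1/2) (by norm_num)
  have hmid : (1/2 : ℝ) • a + (1/2 : ℝ) • b = (a + b) / 2 := by
    simp [smul_eq_mul]; ring
  rw [hmid] at key
  simp only [smul_eq_mul, hg] at key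
  nlinarith [key]
end

section
/- Let M(t) = ∫₀^{|t|} φ(u)(|t|-u) du where φ(u) = 2 for 0 ≤ u ≤ 1 and φ(u) = 8/(1+u)² for u > 1. Then for all a, b ∈ ℝ, M(a) + M(b) - 2·M((a+b)/2) ≤ 16·M((a-b)/2). -/
noncomputable def mm (t : ℝ) : ℝ :=
  if |t| ≤ 1 then t ^ 2 else 6 * |t| - 5 - 8 * Real.log ((1 + |t|) / 2)

lemma int1 (T x y : ℝ) :
    ∫ u in x..y, 2 * (T - u) = (2*T*y - y^2) - (2*T*x - x^2) := by
  apply intervalIntegral.integral_eq_sub_of_hasDerivAt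
  · intro u _
    have h : HasDerivAt (fun u : ℝ => 2*T*u - u^2) (2*T - 2*u) u := by
      have h1 : HasDerivAt (fun u : ℝ => 2*T*u) (2*T) u := by
        simpa using (hasDerivAt_id u).const_mul (2*T)
      have h2 : HasDerivAt (fun u : ℝ => u^2) (2*u) u := by
        simpa using hasDerivAt_pow 2 u
      exact h1.sub h2
    exact h.congr_deriv (by ring)
  · apply Continuous.intervalIntegrable; continuity

lemma int2 (T : ℝ) (hT : 1 ≤ T) :
    ∫ u in (1:ℝ)..T, 8 / (1+u)^2 * (T - u)
      = (-(8*(T+1))/(1+T) - 8*Real.log (1+T)) - (-(8*(T+1))/2 - 8*Real.log 2) := by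
  have key := intervalIntegral.integral_eq_sub_of_hasDerivAt
    (f := fun u : ℝ => -(8*(T+1))/(1+u) - 8*Real.log (1+u))
    (f' := fun u : ℝ => 8 / (1+u)^2 * (T - u)) (a := (1:ℝ)) (b := T) ?_ ?_
  · convert key using 2 <;> norm_num
  · intro u hu
    rw [Set.uIcc_of_le hT] at hu
    have hu1 : (1:ℝ) ≤ u := hu.1
    have hpos : (0:ℝ) < 1 + u := by linarith
    have h1 : HasDerivAt (fun u : ℝ => -(8*(T+1))/(1+u)) (8*(T+1)/(1+u)^2) u := by
      have hb : HasDerivAt (fun u : ℝ => 1 + u) 1 u := by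
        simpa using (hasDerivAt_id u).const_add 1
      have := (hb.inv (ne_of_gt hpos)).const_mul (-(8*(T+1)))
      convert this using 1
      all_goals first
        | (funext x; rw [div_eq_mul_inv]; rfl)
        | (field_simp)
        | rfl
    have h2 : HasDerivAt (fun u : ℝ => 8 * Real.log (1+u)) (8 / (1+u)) u := by
      have hb : HasDerivAt (fun u : ℝ => 1 + u) 1 u := by
        simpa using (hasDerivAt_id u).const_add 1
      have := (hb.log (ne_of_gt hpos)).const_mul 8
      exact this.congr_deriv (by field_simp)
    have := h1.sub h2
    refine this.congr_deriv ?_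
    field_simp
    ring
  · apply ContinuousOn.intervalIntegrable
    apply ContinuousOn.mul
    · apply ContinuousOn.div continuousOn_const
      · fun_prop
      · intro u hu
        rw [Set.uIcc_of_le hT] at hu
        exact ne_of_gt (by nlinarith [hu.1])
    · fun_prop

lemma M_eq_s5 (t : ℝ) : M t = mm t := by
  set T := |t| with hT
  have hT0 : 0 ≤ T := abs_nonneg t
  show (∫ u in (0:ℝ)..T, phi u * (T - u)) = mm t
  by_cases h1 : T ≤ 1
  · have e : ∫ u in (0:ℝ)..T, phi u * (T-u) = ∫ u in (0:ℝ)..T, 2*(T-u) := by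
      apply intervalIntegral.integral_congr
      intro u hu
      rw [Set.uIcc_of_le hT0] at hu
      simp [phi, hu.2.trans h1]
    rw [e, int1]
    unfold mm
    rw [if_pos (hT ▸ h1)]
    have h2 : T^2 = t^2 := by rw [hT, sq_abs]
    nlinarith [h2]
  · push_neg at h1
    have c1 : IntervalIntegrable (fun u => phi u * (T-u)) MeasureTheory.volume 0 1 := by
      apply ContinuousOn.intervalIntegrable
      have heq : Set.EqOn (fun u => phi u * (T-u)) (fun u => 2*(T-u)) (Set.uIcc 0 1) := by
        intro u hu
        rw [Set.uIcc_of_le (by norm_num)] at hu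
        simp [phi, hu.2]
      exact ContinuousOn.congr (by fun_prop) heq
    have c2 : IntervalIntegrable (fun u => phi u * (T-u)) MeasureTheory.volume 1 T := by
      apply ContinuousOn.intervalIntegrable
      have heq : Set.EqOn (fun u => phi u * (T-u)) (fun u => 8/(1+u)^2*(T-u)) (Set.uIcc 1 T) := by
        intro u hu
        rw [Set.uIcc_of_le h1.le] at hu
        by_cases hu1 : u ≤ 1
        · have : u = 1 := le_antisymm hu1 hu.1
          subst this; simp [phi]; norm_num
        · simp [phi, hu1]
      apply ContinuousOn.congr _ heq
      apply ContinuousOn.mul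
      · apply ContinuousOn.div continuousOn_const
        · fun_prop
        · intro u hu
          rw [Set.uIcc_of_le h1.le] at hu
          exact ne_of_gt (by nlinarith [hu.1])
      · fun_prop
    have split := intervalIntegral.integral_add_adjacent_intervals c1 c2
    rw [← split]
    have e1 : ∫ u in (0:ℝ)..1, phi u * (T-u) = ∫ u in (0:ℝ)..1, 2*(T-u) := by
      apply intervalIntegral.integral_congr
      intro u hu
      rw [Set.uIcc_of_le (by norm_num)] at hu
      simp [phi, hu.2]
    have e2 : ∫ u in (1:ℝ)..T, phi u * (T-u) = ∫ u in (1:ℝ)..T, 8/(1+u)^2*(T-u) := by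
      apply intervalIntegral.integral_congr
      intro u hu
      rw [Set.uIcc_of_le h1.le] at hu
      by_cases hu1 : u ≤ 1
      · have : u = 1 := le_antisymm hu1 hu.1
        subst this; simp [phi]; norm_num
      · simp [phi, hu1]
    rw [e1, e2, int1, int2 T h1.le]
    unfold mm
    rw [if_neg (by rw [← hT]; linarith)]
    rw [← hT]
    have hTpos : (0:ℝ) < 1 + T := by linarith
    rw [Real.log_div (by linarith) (by norm_num)]
    field_simp
    ring


lemma mm_small {x : ℝ} (h : |x| ≤ 1) : mm x = x^2 := if_pos h

lemma mm_big {x : ℝ} (h : 1 < |x|) :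
    mm x = 6*|x| - 5 - 8*Real.log ((1+|x|)/2) := if_neg (not_le.mpr h)

lemma mm_neg (x : ℝ) : mm (-x) = mm x := by simp [mm, abs_neg, neg_sq]

lemma log_le_half {x : ℝ} (h : 1 ≤ x) : Real.log ((1+x)/2) ≤ (x-1)/2 := by
  have := Real.log_le_sub_one_of_pos (x := (1+x)/2) (by linarith)
  linarith

lemma log_ge {x : ℝ} (h : 1 ≤ x) : (x-1)/(1+x) ≤ Real.log ((1+x)/2) := by
  have h2 : (0:ℝ) < (1+x)/2 := by linarith
  have h3 := Real.log_le_sub_one_of_pos (inv_pos.mpr h2)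
  rw [Real.log_inv] at h3
  have h4 : ((1+x)/2)⁻¹ = 2/(1+x) := by field_simp
  rw [h4] at h3
  have h5 : (x-1)/(1+x) = 1 - 2/(1+x) := by field_simp; ring
  linarith [h5]

lemma log_nn {x : ℝ} (h : 1 ≤ x) : 0 ≤ Real.log ((1+x)/2) := Real.log_nonneg (by linarith)

lemma log_comb {s d : ℝ} (hd : 0 ≤ d) (h : 1 < s - d) :
    2*Real.log ((1+s)/2) - Real.log ((1+(s+d))/2) - Real.log ((1+(s-d))/2)
      ≤ d^2/((1+s)^2 - d^2) := by
  have hA : (0:ℝ) < (1+(s+d))/2 := by linarith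
  have hB : (0:ℝ) < (1+(s-d))/2 := by linarith
  have hC : (0:ℝ) < (1+s)/2 := by linarith
  have hD : (0:ℝ) < (1+s)^2 - d^2 := by nlinarith
  have key : Real.log ( ((1+s)/2)^2 / ( ((1+(s+d))/2) * ((1+(s-d))/2) ) )
      = 2*Real.log ((1+s)/2) - Real.log ((1+(s+d))/2) - Real.log ((1+(s-d))/2) := by
    rw [Real.log_div (pow_ne_zero 2 hC.ne') (ne_of_gt (mul_pos hA hB)),
        Real.log_mul hA.ne' hB.ne', Real.log_pow]
    push_cast; ring
  rw [← key]
  have hq : ((1+s)/2)^2 / ( ((1+(s+d))/2) * ((1+(s-d))/2) ) = (1+s)^2/((1+s)^2 - d^2) := by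
    rw [div_eq_div_iff (ne_of_gt (mul_pos hA hB)) hD.ne']
    ring
  rw [hq]
  have h1 := Real.log_le_sub_one_of_pos (x := (1+s)^2/((1+s)^2-d^2)) (div_pos (by nlinarith) hD)
  have e : (1+s)^2/((1+s)^2-d^2) - 1 = d^2/((1+s)^2-d^2) := by
    field_simp [hD.ne']
    ring
  linarith

set_option maxHeartbeats 2000000 in
lemma key (s d : ℝ) (hs : 0 ≤ s) (hd : 0 ≤ d) :
    mm (s+d) + mm (s-d) - 2 * mm s ≤ 16 * mm d := by
  rcases le_or_gt (s+d) 1 with hsd | hsd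
  · rw [mm_small (abs_le.mpr ⟨by linarith, hsd⟩),
        mm_small (abs_le.mpr ⟨by linarith, by linarith⟩),
        mm_small (abs_le.mpr ⟨by linarith, by linarith⟩),
        mm_small (abs_le.mpr ⟨by linarith, by linarith⟩)]
    nlinarith
  · have habs : |s+d| = s+d := abs_of_nonneg (by linarith)
    have hbig : mm (s+d) = 6*(s+d) - 5 - 8*Real.log ((1+(s+d))/2) := by
      rw [mm_big (by rw [habs]; exact hsd), habs]
    have hL1 : (s+d-1)/(1+(s+d)) ≤ Real.log ((1+(s+d))/2) := log_ge (by linarith)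
    have hL1nn : 0 ≤ Real.log ((1+(s+d))/2) := log_nn (by linarith)
    rcases le_or_gt s 1 with hs1 | hs1
    · rcases le_or_gt d 1 with hd1 | hd1
      · -- case 2a
        rw [hbig, mm_small (abs_le.mpr ⟨by linarith, by linarith⟩),
            mm_small (abs_le.mpr ⟨by linarith, hs1⟩),
            mm_small (abs_le.mpr ⟨by linarith, hd1⟩)]
        have hpos : (0:ℝ) < 1+(s+d) := by linarith
        rw [div_le_iff₀ hpos] at hL1
        nlinarith [hL1, sq_nonneg (s+d-1), sq_nonneg (s-1), sq_nonneg (d-1), sq_nonneg (s-d), mul_nonneg hs hd]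
      · have hdbig : mm d = 6*d - 5 - 8*Real.log ((1+d)/2) := by
          rw [mm_big (by rw [abs_of_nonneg hd]; exact hd1), abs_of_nonneg hd]
        have hLd : Real.log ((1+d)/2) ≤ (d-1)/2 := log_le_half (by linarith)
        rcases le_or_gt (d - s) 1 with hds | hds
        · -- case 2b : s ≤ 1 < d, d-s ≤ 1
          rw [hbig, hdbig, mm_small (abs_le.mpr ⟨by linarith, by linarith⟩),
              mm_small (abs_le.mpr ⟨by linarith, hs1⟩)]
          nlinarith [hL1nn, hLd, sq_nonneg s, sq_nonneg (s-d)]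
        · -- case 2c : d - s > 1
          have h2 : mm (s-d) = 6*(d-s) - 5 - 8*Real.log ((1+(d-s))/2) := by
            rw [mm_big (by rw [abs_of_neg (by linarith)]; linarith)]
            rw [abs_of_neg (by linarith)]
            norm_num
          have hL2nn : 0 ≤ Real.log ((1+(d-s))/2) := log_nn (by linarith)
          rw [hbig, hdbig, h2, mm_small (abs_le.mpr ⟨by linarith, hs1⟩)]
          nlinarith [hL1nn, hL2nn, hLd, sq_nonneg s]
    · -- s > 1
      have hsbig : mm s = 6*s - 5 - 8*Real.log ((1+s)/2) := by
        rw [mm_big (by rw [abs_of_nonneg hs]; exact hs1), abs_of_nonneg hs]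
      have hL0 : Real.log ((1+s)/2) ≤ (s-1)/2 := log_le_half hs1.le
      have hL0nn : 0 ≤ Real.log ((1+s)/2) := log_nn hs1.le
      rcases le_or_gt (|s-d|) 1 with h2 | h2
      · rcases le_or_gt d 1 with hd1 | hd1
        · -- case 2d : s>1, d ≤ 1, |s-d| ≤ 1
          have hsd2 : s - d ≤ 1 := (abs_le.mp h2).2
          rw [hbig, hsbig, mm_small h2, mm_small (abs_le.mpr ⟨by linarith, hd1⟩)]
          have hpos : (0:ℝ) < 1+(s+d) := by linarith
          rw [div_le_iff₀ hpos] at hL1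
          nlinarith [hL1, hL0, sq_nonneg (s-1), sq_nonneg (s-d), sq_nonneg (s+d-1), mul_nonneg hd (sub_nonneg.mpr hs1.le)]
        · -- case 2e : s>1, d>1, |s-d| ≤ 1
          have hdbig : mm d = 6*d - 5 - 8*Real.log ((1+d)/2) := by
            rw [mm_big (by rw [abs_of_nonneg hd]; exact hd1), abs_of_nonneg hd]
          have hLd : Real.log ((1+d)/2) ≤ (d-1)/2 := log_le_half (by linarith)
          have habs2 := abs_le.mp h2
          have hsq : (s-d)^2 ≤ 1 := by nlinarith [habs2.1, habs2.2]
          rw [hbig, hsbig, hdbig, mm_small h2]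
          linarith [hL1nn, hL0, hLd, hsq, habs2.1]
      · rcases le_or_gt d s with hds | hds
        · -- case 2f : s - d > 1
          have hsd1 : 1 < s - d := by
            rwa [abs_of_nonneg (sub_nonneg.mpr hds)] at h2
          have h2' : mm (s-d) = 6*(s-d) - 5 - 8*Real.log ((1+(s-d))/2) := by
            rw [mm_big (by rwa [abs_of_nonneg (sub_nonneg.mpr hds)]),
                abs_of_nonneg (sub_nonneg.mpr hds)]
          have hcomb := log_comb hd hsd1
          have hDpos : (0:ℝ) < (1+s)^2 - d^2 := by nlinarith
          rcases le_or_gt d 1 with hd1 | hd1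
          · have hD4 : 4 ≤ (1+s)^2 - d^2 := by nlinarith
            have hb : d^2/((1+s)^2-d^2) ≤ 2*d^2 := by
              rw [div_le_iff₀ hDpos]
              nlinarith [mul_le_mul_of_nonneg_left hD4 (sq_nonneg d)]
            rw [hbig, hsbig, h2', mm_small (abs_le.mpr ⟨by linarith, hd1⟩)]
            linarith [hcomb, hb]
          · have hdbig : mm d = 6*d - 5 - 8*Real.log ((1+d)/2) := by
              rw [mm_big (by rw [abs_of_nonneg hd]; exact hd1), abs_of_nonneg hd]
            have hLd : Real.log ((1+d)/2) ≤ (d-1)/2 := log_le_half (by linarith)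
            have hD4 : 4+4*d ≤ (1+s)^2 - d^2 := by nlinarith
            have hb : d^2/((1+s)^2-d^2) ≤ 4*d-2 := by
              rw [div_le_iff₀ hDpos]
              nlinarith [mul_le_mul_of_nonneg_left hD4 (by linarith : (0:ℝ) ≤ 4*d-2), sq_nonneg (d-1)]
            rw [hbig, hsbig, h2', hdbig]
            linarith [hcomb, hb, hLd]
        · -- d - s > 1 : case 2g
          have hds1 : 1 < d - s := by
            have he : |s-d| = d - s := by
              rw [abs_of_neg (by linarith : s - d < 0)]; ring
            rw [he] at h2; exact h2
          have hdbig : mm d = 6*d - 5 - 8*Real.log ((1+d)/2) := by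
            rw [mm_big (by rw [abs_of_nonneg hd]; linarith), abs_of_nonneg hd]
          have hLd : Real.log ((1+d)/2) ≤ (d-1)/2 := log_le_half (by linarith)
          have h2' : mm (s-d) = 6*(d-s) - 5 - 8*Real.log ((1+(d-s))/2) := by
            rw [mm_big (by rw [abs_of_neg (by linarith)]; linarith)]
            rw [abs_of_neg (by linarith)]
            norm_num
          have hL2nn : 0 ≤ Real.log ((1+(d-s))/2) := log_nn (by linarith)
          rw [hbig, hsbig, hdbig, h2']
          nlinarith [hL1nn, hL2nn, hL0, hLd]

theorem stmt_5 (a b : ℝ) :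
    M a + M b - 2 * M ((a + b) / 2) ≤ 16 * M ((a - b) / 2) := by
  rw [M_eq_s5, M_eq_s5, M_eq_s5, M_eq_s5]
  set s := (a+b)/2 with hsdef
  set d := (a-b)/2 with hddef
  have ha : a = s + d := by rw [hsdef, hddef]; ring
  have hb : b = s - d := by rw [hsdef, hddef]; ring
  rcases le_total 0 s with hs | hs <;> rcases le_total 0 d with hd | hd
  · have := key s d hs hd
    rw [← ha, ← hb] at this
    linarith
  · have := key s (-d) hs (by linarith)
    have e1 : s + -d = b := by rw [hb]; ring
    have e2 : s - -d = a := by rw [ha]; ring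
    rw [e1, e2, mm_neg] at this
    linarith
  · have := key (-s) d (by linarith) hd
    have e1 : -s + d = -b := by rw [hb]; ring
    have e2 : -s - d = -a := by rw [ha]; ring
    rw [e1, e2, mm_neg, mm_neg, mm_neg] at this
    linarith
  · have := key (-s) (-d) (by linarith) (by linarith)
    have e1 : -s + -d = -a := by rw [ha]; ring
    have e2 : -s - -d = -b := by rw [hb]; ring
    rw [e1, e2, mm_neg, mm_neg, mm_neg, mm_neg] at this
    linarith
end

section
/- Let M : ℝ → ℝ be even, convex, M(0)=0, with M' concave on [0,∞) and M'(0)=0. Then M satisfies the Δ₂ condition with constant 4: M(2t) ≤ 4·M(t) for all t ≥ 0. -/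
theorem stmt_6 (M : ℝ → ℝ)
    (heven : ∀ t : ℝ, M (-t) = M t)
    (hconv : ConvexOn ℝ Set.univ M)
    (hC1 : ContDiff ℝ 1 M)
    (hM0 : M 0 = 0)
    (hM'0 : deriv M 0 = 0)
    (hconc : ConcaveOn ℝ (Set.Ici 0) (deriv M)) :
    ∀ t ≥ (0:ℝ), M (2 * t) ≤ 4 * M t := by
  have hdiff : Differentiable ℝ M := hC1.differentiable one_ne_zero
  set g := deriv M with hg
  have hF : ∀ t : ℝ, HasDerivAt (fun t => 4 * M t - M (2 * t)) (4 * g t - g (2 * t) * 2) t := by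
    intro t
    have h1 : HasDerivAt M (g t) t := (hdiff t).hasDerivAt
    have h2 : HasDerivAt (fun t => M (2 * t)) (g (2 * t) * 2) t := by
      have := ((hdiff (2 * t)).hasDerivAt).comp t ((hasDerivAt_id t).const_mul 2)
      simpa [Function.comp_def] using this
    exact (h1.const_mul 4).sub h2
  have key : ∀ t : ℝ, 0 ≤ t → 0 ≤ 4 * g t - g (2 * t) * 2 := by
    intro t ht
    have h2t : (2:ℝ) * t ∈ Set.Ici (0:ℝ) := by simp; linarith
    have := hconc.2 (Set.self_mem_Ici) h2t (by norm_num : (0:ℝ) ≤ 1/2)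
      (by norm_num : (0:ℝ) ≤ 1/2) (by norm_num)
    simp only [smul_eq_mul, mul_zero, zero_add, ← hg, hM'0] at this
    have ht' : (1/2 : ℝ) * (2 * t) = t := by ring
    rw [ht'] at this
    linarith
  have hmono : MonotoneOn (fun t => 4 * M t - M (2 * t)) (Set.Ici 0) := by
    apply monotoneOn_of_deriv_nonneg (convex_Ici 0)
    · exact (((continuous_const.mul hdiff.continuous).sub
        (hdiff.continuous.comp (continuous_const.mul continuous_id))).continuousOn)
    · intro t ht
      exact (hF t).differentiableAt.differentiableWithinAt
    · intro t ht
      rw [(hF t).deriv]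
      have : (0:ℝ) < t := by simpa using ht
      exact key t this.le
  intro t ht
  have h := hmono (Set.self_mem_Ici) ht ht
  simp only [hM0, mul_zero, sub_zero] at h
  linarith
end

section
/- Let μ be a probability measure, X a closed subspace of L¹(μ) whose unit sphere S_X is equi-integrable, i.e. lim_{t→∞} sup{∫_{{|f|>t}} |f| dμ : f ∈ X, ‖f‖₁ = 1} = 0. Then for every t ∈ (0,1), C_X(t) := inf{μ({|f| > t}) : f ∈ X, ‖f‖₁ = 1} > 0. -/
open MeasureTheory

theorem stmt_9 {Ω : Type*} [MeasurableSpace Ω] (μ : Measure Ω) [IsProbabilityMeasure μ]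
    (X : Submodule ℝ (Lp ℝ 1 μ)) (hclosed : IsClosed (X : Set (Lp ℝ 1 μ)))
    (hne : ∃ f ∈ X, ‖f‖ = 1)
    (hequi : ∀ ε > (0:ℝ), ∃ T : ℝ, ∀ t ≥ T, ∀ f ∈ X, ‖f‖ = 1 →
      ∫ ω in {ω | t < |(f : Ω → ℝ) ω|}, |(f : Ω → ℝ) ω| ∂μ < ε) :
    ∀ t ∈ Set.Ioo (0:ℝ) 1,
      0 < sInf {r : ℝ | ∃ f ∈ X, ‖f‖ = 1 ∧
        r = (μ {ω | t < |(f : Ω → ℝ) ω|}).toReal} := by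
  intro t ht
  obtain ⟨ht0, ht1⟩ := ht
  set ε : ℝ := (1 - t) / 2 with hεdef
  have hε : 0 < ε := by rw [hεdef]; linarith
  obtain ⟨T₀, hT₀⟩ := hequi ε hε
  set T : ℝ := max T₀ 1 with hTdef
  have hT1 : (1:ℝ) ≤ T := le_max_right _ _
  have hTpos : (0:ℝ) < T := lt_of_lt_of_le one_pos hT1
  have htT : t < T := lt_of_lt_of_le ht1 hT1
  set c : ℝ := (1 - t) / (2 * T) with hcdef
  have hc : 0 < c := by rw [hcdef]; apply div_pos (by linarith) (by linarith)
  -- the set is nonempty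
  obtain ⟨f₀, hf₀X, hf₀⟩ := hne
  have hnonempty : {r : ℝ | ∃ f ∈ X, ‖f‖ = 1 ∧
      r = (μ {ω | t < |(f : Ω → ℝ) ω|}).toReal}.Nonempty :=
    ⟨(μ {ω | t < |(f₀ : Ω → ℝ) ω|}).toReal, f₀, hf₀X, hf₀, rfl⟩
  refine lt_of_lt_of_le hc (le_csInf hnonempty ?_)
  rintro r ⟨f, hfX, hf1, rfl⟩
  set g : Ω → ℝ := (f : Ω → ℝ) with hgdef
  have hgsm : StronglyMeasurable g := Lp.stronglyMeasurable f
  have hgm : Measurable g := hgsm.measurable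
  have hgint : Integrable g μ := L1.integrable_coeFn f
  have hgabs : Integrable (fun ω => |g ω|) μ := hgint.abs
  set A : Set Ω := {ω | t < |g ω|} with hAdef
  set B : Set Ω := {ω | T < |g ω|} with hBdef
  have hAm : MeasurableSet A := measurableSet_lt measurable_const hgm.abs
  have hBm : MeasurableSet B := measurableSet_lt measurable_const hgm.abs
  have hBA : B ⊆ A := fun ω hω => lt_trans htT hω
  have hμA : (μ A).toReal ≤ 1 := by
    rw [← ENNReal.toReal_one]
    exact ENNReal.toReal_mono ENNReal.one_ne_top (prob_le_one)
  -- norm as integral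
  have hnorm : (1:ℝ) = ∫ ω, |g ω| ∂μ := by
    rw [← hf1, L1.norm_eq_integral_norm]
    simp [hgdef, Real.norm_eq_abs]
  -- split the integral
  have hsplit : ∫ ω, |g ω| ∂μ = (∫ ω in Aᶜ, |g ω| ∂μ) + ∫ ω in A, |g ω| ∂μ := by
    rw [add_comm, integral_add_compl hAm hgabs]
  have hsplit2 : ∫ ω in A, |g ω| ∂μ = (∫ ω in A \ B, |g ω| ∂μ) + ∫ ω in B, |g ω| ∂μ := by
    rw [← setIntegral_union Set.disjoint_sdiff_left hBm
      (hgabs.integrableOn) (hgabs.integrableOn), Set.diff_union_of_subset hBA]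
  -- bound on Aᶜ
  have hbound1 : ∫ ω in Aᶜ, |g ω| ∂μ ≤ t := by
    calc ∫ ω in Aᶜ, |g ω| ∂μ ≤ ∫ _ in Aᶜ, t ∂μ := by
          refine setIntegral_mono_on hgabs.integrableOn (integrableOn_const ?_) hAm.compl ?_
          · exact measure_ne_top μ _
          · intro ω hω
            simpa [hAdef, not_lt] using hω
      _ = t * (μ Aᶜ).toReal := by rw [setIntegral_const, smul_eq_mul, mul_comm, Measure.real]
      _ ≤ t * 1 := by
          refine mul_le_mul_of_nonneg_left ?_ ht0.le
          rw [← ENNReal.toReal_one]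
          exact ENNReal.toReal_mono ENNReal.one_ne_top (prob_le_one)
      _ = t := mul_one t
  -- bound on A \ B
  have hbound2 : ∫ ω in A \ B, |g ω| ∂μ ≤ T * (μ A).toReal := by
    calc ∫ ω in A \ B, |g ω| ∂μ ≤ ∫ _ in A \ B, T ∂μ := by
          refine setIntegral_mono_on hgabs.integrableOn (integrableOn_const ?_)
            (hAm.diff hBm) ?_
          · exact measure_ne_top μ _
          · intro ω hω
            have := hω.2
            simpa [hBdef, not_lt] using this
      _ = T * (μ (A \ B)).toReal := by rw [setIntegral_const, smul_eq_mul, mul_comm, Measure.real]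
      _ ≤ T * (μ A).toReal := by
          refine mul_le_mul_of_nonneg_left ?_ hTpos.le
          exact ENNReal.toReal_mono (measure_ne_top μ A) (measure_mono Set.diff_subset)
  -- bound on B
  have hbound3 : ∫ ω in B, |g ω| ∂μ < ε := hT₀ T (le_max_left _ _) f hfX hf1
  -- combine
  have hkey : 1 ≤ t + (T * (μ A).toReal + ε) := by
    rw [hnorm, hsplit, hsplit2]
    gcongr
  have h2 : ε ≤ T * (μ A).toReal := by
    have : 1 - t - ε = ε := by rw [hεdef]; ring
    linarith
  rw [hcdef, div_le_iff₀ (by positivity)]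
  calc (1 - t) = ε * 2 := by rw [hεdef]; ring
    _ ≤ T * (μ A).toReal * 2 := by linarith
    _ = (μ A).toReal * (2 * T) := by ring
end

section
/- Let μ be a probability measure on Ω and g ∈ L¹(μ) with distribution function F_g(t) = μ({|g| > t}). Then for every τ > 0: τ² ∫_{{|g| ≤ 1/τ}} g² dμ + τ ∫_{{|g| > 1/τ}} |g| dμ ≤ 2τ² ∫₀^{1/τ} ∫_t^{+∞} F_g(x) dx dt. -/
open MeasureTheory Set ENNReal

lemma aux_real_int {a b : ℝ} (ha : 0 ≤ a) (hb : 0 < b) :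
    ∫ t in Set.Ioc (0:ℝ) b, max (a - t) 0
      = if a ≤ b then a^2/2 else a*b - b^2/2 := by
  have hsub : ∀ c d : ℝ, c ≤ d → ∫ t in Set.Ioc c d, (a - t) = a*(d-c) - (d^2-c^2)/2 := by
    intro c d hcd
    rw [← intervalIntegral.integral_of_le hcd,
      intervalIntegral.integral_sub intervalIntegrable_const intervalIntegral.intervalIntegrable_id,
      intervalIntegral.integral_const, integral_id, smul_eq_mul]
    ring
  split_ifs with hab
  · have hsplit : Set.Ioc (0:ℝ) b = Set.Ioc 0 a ∪ Set.Ioc a b := (Set.Ioc_union_Ioc_eq_Ioc ha hab).symm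
    rw [hsplit, setIntegral_union (Set.Ioc_disjoint_Ioc_of_le le_rfl) measurableSet_Ioc]
    · have h1 : ∫ t in Set.Ioc (0:ℝ) a, max (a - t) 0 = ∫ t in Set.Ioc (0:ℝ) a, (a - t) := by
        apply setIntegral_congr_fun measurableSet_Ioc
        intro t ht
        exact max_eq_left (by linarith [ht.2])
      have h2 : ∫ t in Set.Ioc a b, max (a - t) 0 = 0 := by
        rw [setIntegral_congr_fun measurableSet_Ioc (g := fun _ => (0:ℝ))
          (fun t ht => max_eq_right (by linarith [ht.1]))]
        simp
      rw [h1, h2, hsub 0 a ha]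
      ring
    · exact ((continuous_const.sub continuous_id).max continuous_const).integrableOn_Ioc
    · exact ((continuous_const.sub continuous_id).max continuous_const).integrableOn_Ioc
  · push_neg at hab
    rw [setIntegral_congr_fun measurableSet_Ioc (g := fun t => a - t)
      (fun t ht => max_eq_left (by linarith [ht.2])), hsub 0 b hb.le]
    ring

lemma aux_ofReal_max (x : ℝ) : ENNReal.ofReal x = ENNReal.ofReal (max x 0) := by
  rcases le_total x 0 with h | h
  · rw [ENNReal.ofReal_of_nonpos h, max_eq_right h, ENNReal.ofReal_zero]
  · rw [max_eq_left h]

lemma aux_lint {a b : ℝ} (ha : 0 ≤ a) (hb : 0 < b) :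
    ∫⁻ t in Set.Ioc (0:ℝ) b, ENNReal.ofReal (a - t)
      = ENNReal.ofReal (if a ≤ b then a^2/2 else a*b - b^2/2) := by
  have hint : IntegrableOn (fun t => max (a - t) 0) (Set.Ioc (0:ℝ) b) :=
    ((continuous_const.sub continuous_id).max continuous_const).integrableOn_Ioc
  calc ∫⁻ t in Set.Ioc (0:ℝ) b, ENNReal.ofReal (a - t)
      = ∫⁻ t in Set.Ioc (0:ℝ) b, ENNReal.ofReal (max (a - t) 0) := by
        simp_rw [← aux_ofReal_max]
    _ = ENNReal.ofReal (∫ t in Set.Ioc (0:ℝ) b, max (a - t) 0) :=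
        (ofReal_integral_eq_lintegral_ofReal hint
          (Filter.Eventually.of_forall fun t => le_max_right _ _)).symm
    _ = _ := by rw [aux_real_int ha hb]

lemma aux_inner {Ω : Type*} [MeasurableSpace Ω] (μ : Measure Ω) [SFinite μ]
    (g : Ω → ℝ) (hmeas : Measurable g) (t : ℝ) :
    ∫⁻ x in Set.Ioi t, μ {ω | x < |g ω|}
      = ∫⁻ ω, ENNReal.ofReal (|g ω| - t) ∂μ := by
  have hset : MeasurableSet {p : ℝ × Ω | p.1 < |g p.2|} :=
    measurableSet_lt measurable_fst (hmeas.abs.comp measurable_snd)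
  have humeas : AEMeasurable (Function.uncurry fun x ω =>
      ({ω' | x < |g ω'|}.indicator (1 : Ω → ℝ≥0∞) ω))
      ((volume.restrict (Set.Ioi t)).prod μ) := by
    have : (Function.uncurry fun x ω => ({ω' | x < |g ω'|}.indicator (1 : Ω → ℝ≥0∞) ω))
        = {p : ℝ × Ω | p.1 < |g p.2|}.indicator 1 := by
      ext p
      by_cases h : p.1 < |g p.2| <;>
        simp [Function.uncurry, Set.indicator_apply, h]
    rw [this]
    exact (measurable_const.indicator hset).aemeasurable
  calc ∫⁻ x in Set.Ioi t, μ {ω | x < |g ω|}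
      = ∫⁻ x in Set.Ioi t, ∫⁻ ω, ({ω' | x < |g ω'|}.indicator (1 : Ω → ℝ≥0∞) ω) ∂μ := by
        refine lintegral_congr fun x => ?_
        rw [lintegral_indicator_one (measurableSet_lt measurable_const hmeas.abs)]
    _ = ∫⁻ ω, (∫⁻ x in Set.Ioi t, ({ω' | x < |g ω'|}.indicator (1 : Ω → ℝ≥0∞) ω)) ∂μ :=
        lintegral_lintegral_swap humeas
    _ = ∫⁻ ω, ENNReal.ofReal (|g ω| - t) ∂μ := by
        refine lintegral_congr fun ω => ?_
        have h1 : (fun x => ({ω' | x < |g ω'|}.indicator (1 : Ω → ℝ≥0∞) ω))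
            = (Set.Iio |g ω|).indicator (1 : ℝ → ℝ≥0∞) := by
          ext x
          by_cases h : x < |g ω| <;> simp [Set.indicator_apply, h]
        rw [h1, lintegral_indicator_one measurableSet_Iio, Measure.restrict_apply measurableSet_Iio,
          Set.inter_comm, Set.Ioi_inter_Iio, Real.volume_Ioo]

theorem stmt_11 {Ω : Type*} [MeasurableSpace Ω] (μ : Measure Ω) [IsProbabilityMeasure μ]
    (g : Ω → ℝ) (hmeas : Measurable g) (hint : Integrable g μ) :
    ∀ τ > (0:ℝ),
      τ ^ 2 * ∫ ω in {ω | |g ω| ≤ 1/τ}, (g ω) ^ 2 ∂μ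
        + τ * ∫ ω in {ω | 1/τ < |g ω|}, |g ω| ∂μ
      ≤ 2 * τ ^ 2 * ∫ t in Set.Ioc (0:ℝ) (1/τ),
          ∫ x in Set.Ioi t, (μ {ω | x < |g ω|}).toReal := by
  intro τ hτ
  set b : ℝ := 1/τ with hbdef
  have hb : 0 < b := by positivity
  set h : ℝ → ℝ := fun a => if a ≤ b then a^2/2 else a*b - b^2/2 with hhdef
  set H : Ω → ℝ := fun ω => h (|g ω|) with hHdef
  have hmeash : Measurable h := by
    apply Measurable.ite measurableSet_Iic <;> fun_prop
  have hH_nonneg : ∀ ω, 0 ≤ H ω := by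
    intro ω
    simp only [hHdef, hhdef]
    have := abs_nonneg (g ω)
    split_ifs with hc
    · positivity
    · push_neg at hc; nlinarith
  have hH_le : ∀ ω, H ω ≤ b * |g ω| := by
    intro ω
    simp only [hHdef, hhdef]
    have := abs_nonneg (g ω)
    split_ifs with hc
    · nlinarith
    · push_neg at hc; nlinarith
  have hHint : Integrable H μ := by
    refine Integrable.mono' (hint.abs.const_mul b)
      ((hmeash.comp hmeas.abs).aestronglyMeasurable) ?_
    filter_upwards with ω
    rw [Real.norm_eq_abs, abs_of_nonneg (hH_nonneg ω)]
    exact hH_le ω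
  -- the set functions
  set F : ℝ → ℝ≥0∞ := fun x => μ {ω | x < |g ω|} with hFdef
  have hFanti : Antitone F := fun x y hxy =>
    measure_mono fun ω hω => lt_of_le_of_lt hxy hω
  have hFmeas : Measurable F := hFanti.measurable
  set L : ℝ → ℝ≥0∞ := fun t => ∫⁻ x in Set.Ioi t, F x with hLdef
  have hLanti : Antitone L := fun s t hst => lintegral_mono_set (Set.Ioi_subset_Ioi hst)
  have hLmeas : Measurable L := hLanti.measurable
  have hL0 : L 0 < ⊤ := by
    have : L 0 = ∫⁻ ω, ENNReal.ofReal (|g ω|) ∂μ := by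
      rw [hLdef]
      exact (lintegral_eq_lintegral_meas_lt μ
        (Filter.Eventually.of_forall fun ω => abs_nonneg (g ω)) hmeas.abs.aemeasurable).symm
    rw [this]
    simp_rw [← Real.norm_eq_abs, ofReal_norm_eq_enorm]
    exact hint.hasFiniteIntegral
  -- main chain: the double lintegral equals ∫⁻ ofReal H
  have hS : ∫⁻ t in Set.Ioc (0:ℝ) b, L t = ∫⁻ ω, ENNReal.ofReal (H ω) ∂μ := by
    calc ∫⁻ t in Set.Ioc (0:ℝ) b, L t
        = ∫⁻ t in Set.Ioc (0:ℝ) b, ∫⁻ ω, ENNReal.ofReal (|g ω| - t) ∂μ :=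
          lintegral_congr fun t => aux_inner μ g hmeas t
      _ = ∫⁻ ω, (∫⁻ t in Set.Ioc (0:ℝ) b, ENNReal.ofReal (|g ω| - t)) ∂μ := by
          refine lintegral_lintegral_swap ?_
          exact (ENNReal.measurable_ofReal.comp
            ((hmeas.abs.comp measurable_snd).sub measurable_fst)).aemeasurable
      _ = ∫⁻ ω, ENNReal.ofReal (H ω) ∂μ :=
          lintegral_congr fun ω => aux_lint (abs_nonneg (g ω)) hb
  -- convert RHS to ∫ H
  have hRHS : ∫ t in Set.Ioc (0:ℝ) b, ∫ x in Set.Ioi t, (μ {ω | x < |g ω|}).toReal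
      = ∫ ω, H ω ∂μ := by
    have hin : ∀ t : ℝ, ∫ x in Set.Ioi t, (F x).toReal = (L t).toReal := fun t =>
      integral_toReal (hFmeas.aemeasurable.restrict)
        (Filter.Eventually.of_forall fun x => measure_lt_top μ _)
    calc ∫ t in Set.Ioc (0:ℝ) b, ∫ x in Set.Ioi t, (F x).toReal
        = ∫ t in Set.Ioc (0:ℝ) b, (L t).toReal := by
          exact setIntegral_congr_fun measurableSet_Ioc fun t _ => hin t
      _ = (∫⁻ t in Set.Ioc (0:ℝ) b, L t).toReal := by
          refine integral_toReal (hLmeas.aemeasurable.restrict) ?_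
          filter_upwards [ae_restrict_mem measurableSet_Ioc] with t ht
          exact lt_of_le_of_lt (hLanti ht.1.le) hL0
      _ = (∫⁻ ω, ENNReal.ofReal (H ω) ∂μ).toReal := by rw [hS]
      _ = ∫ ω, H ω ∂μ := by
          rw [← ofReal_integral_eq_lintegral_ofReal hHint
            (Filter.Eventually.of_forall hH_nonneg),
            ENNReal.toReal_ofReal (integral_nonneg hH_nonneg)]
  rw [hRHS]
  -- LHS bound
  set A : Set Ω := {ω | |g ω| ≤ b} with hAdef
  have hA : MeasurableSet A := measurableSet_le hmeas.abs measurable_const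
  have hAc : {ω | b < |g ω|} = Aᶜ := by
    ext ω; simp [hAdef, not_le]
  have eq1 : ∫ ω in A, (g ω)^2 ∂μ = ∫ ω in A, 2 * H ω ∂μ := by
    refine setIntegral_congr_fun hA fun ω hω => ?_
    have hHω : H ω = |g ω|^2/2 := by
      simp only [hHdef, hhdef]
      rw [if_pos (show |g ω| ≤ b from hω)]
    rw [hHω, ← sq_abs]; ring
  have ineq2 : ∫ ω in Aᶜ, τ * |g ω| ∂μ ≤ ∫ ω in Aᶜ, 2 * τ^2 * H ω ∂μ := by
    refine setIntegral_mono_on ((hint.abs.const_mul τ).integrableOn)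
      ((hHint.const_mul (2*τ^2)).integrableOn) hA.compl ?_
    intro ω hω
    have hω' : b < |g ω| := by
      have := hω
      simp only [hAdef, Set.mem_compl_iff, Set.mem_setOf_eq, not_le] at this
      exact this
    have hHω : H ω = |g ω| * b - b^2/2 := by
      simp only [hHdef, hhdef]
      rw [if_neg (not_le.mpr hω')]
    rw [hHω, hbdef] at *
    have h1 : 1 < |g ω| * τ := (div_lt_iff₀ hτ).mp hω'
    have h2 : 2 * τ^2 * (|g ω| * (1/τ) - (1/τ)^2/2) = 2 * (|g ω| * τ) - 1 := by
      field_simp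
    rw [h2]
    linarith
  calc τ ^ 2 * ∫ ω in A, (g ω) ^ 2 ∂μ + τ * ∫ ω in {ω | b < |g ω|}, |g ω| ∂μ
      = 2 * τ^2 * ∫ ω in A, H ω ∂μ + ∫ ω in Aᶜ, τ * |g ω| ∂μ := by
        rw [eq1, hAc, integral_const_mul, integral_const_mul]; ring
    _ ≤ 2 * τ^2 * ∫ ω in A, H ω ∂μ + ∫ ω in Aᶜ, 2 * τ^2 * H ω ∂μ := by
        gcongr
    _ = 2 * τ^2 * (∫ ω in A, H ω ∂μ + ∫ ω in Aᶜ, H ω ∂μ) := by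
        rw [integral_const_mul]; ring
    _ = 2 * τ^2 * ∫ ω, H ω ∂μ := by rw [integral_add_compl hA hHint]
end

section
/- Let f(x) = 1/(x·log²(x/e)) on (0,1], which is strictly decreasing on (0,1/e]. Let f⁻¹ : [1,∞) → (0,1/e) denote the inverse of the restriction of f to that decreasing branch, so that for t > 1 the Lebesgue measure of {x ∈ (0,1) : f(x) > t} equals f⁻¹(t). Let x₀ ∈ (0,1/e) satisfy f(x₀)=1 and set t₀ = f(x₀²/e). Then for all t > t₀, f⁻¹(t) > e/(16·t²). -/
noncomputable def f (x : ℝ) : ℝ := 1 / (x * (Real.log (x / Real.exp 1)) ^ 2)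

lemma psi_mono (c : ℝ) (hc : 0 < c) :
    StrictMonoOn (fun v : ℝ => v - c * Real.log v) (Set.Ici c) := by
  have hsub : Set.Ici c ⊆ {(0:ℝ)}ᶜ := by
    intro x hx
    simp only [Set.mem_Ici] at hx
    simp only [Set.mem_compl_iff, Set.mem_singleton_iff]
    intro h; rw [h] at hx; linarith
  apply strictMonoOn_of_deriv_pos (convex_Ici c)
  · exact continuousOn_id.sub (continuousOn_const.mul (Real.continuousOn_log.mono hsub))
  · intro x hx
    rw [interior_Ici] at hx
    have hx0 : 0 < x := hc.trans hx
    have hd : HasDerivAt (fun v : ℝ => v - c * Real.log v) (1 - c * x⁻¹) x :=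
      (hasDerivAt_id x).sub ((Real.hasDerivAt_log hx0.ne').const_mul c)
    rw [hd.deriv]
    have h1 : c * x⁻¹ < 1 := by
      rw [← div_eq_mul_inv, div_lt_one hx0]; exact hx
    linarith

lemma f_eq (x : ℝ) (hx : 0 < x) : f x = 1 / (x * (Real.log x - 1) ^ 2) := by
  unfold f
  rw [Real.log_div hx.ne' (Real.exp_ne_zero 1), Real.log_exp]

lemma f_exp (u : ℝ) : f (Real.exp (1 - u)) = Real.exp (u - 1) / u ^ 2 := by
  rw [f_eq _ (Real.exp_pos _), Real.log_exp]
  rw [show (1 - u - 1 : ℝ) = -u by ring, neg_sq, one_div, mul_inv, ← Real.exp_neg,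
    show -(1 - u) = u - 1 by ring, div_eq_mul_inv]

theorem stmt_19 (finv : ℝ → ℝ)
    (hfinv : ∀ t ≥ (1:ℝ), finv t ∈ Set.Ioo (0:ℝ) (Real.exp 1)⁻¹ ∧ f (finv t) = t)
    (x₀ : ℝ) (hx₀ : x₀ ∈ Set.Ioo (0:ℝ) (Real.exp 1)⁻¹) (hfx₀ : f x₀ = 1)
    (t₀ : ℝ) (ht₀ : t₀ = f (x₀ ^ 2 / Real.exp 1)) :
    ∀ t > t₀, finv t > Real.exp 1 / (16 * t ^ 2) := by
  intro t ht
  obtain ⟨hx₀0, hx₀e⟩ := hx₀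
  have he : (1:ℝ) < Real.exp 1 := by
    have := Real.exp_one_gt_d9; linarith
  -- u₀
  have hlogx₀ : Real.log x₀ < -1 := by
    have := Real.log_lt_log hx₀0 hx₀e
    rwa [Real.log_inv, Real.log_exp] at this
  set u₀ : ℝ := 1 - Real.log x₀ with hu₀def
  have hu₀2 : 2 < u₀ := by rw [hu₀def]; linarith
  have hu₀0 : 0 < u₀ := by linarith
  have hx₀exp : x₀ = Real.exp (1 - u₀) := by
    rw [show (1 - u₀ : ℝ) = Real.log x₀ by rw [hu₀def]; ring, Real.exp_log hx₀0]
  -- key identity exp (u₀ - 1) = u₀ ^ 2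
  have key₀ : Real.exp (u₀ - 1) = u₀ ^ 2 := by
    have h1 : f x₀ = Real.exp (u₀ - 1) / u₀ ^ 2 := by rw [hx₀exp, f_exp]
    rw [hfx₀] at h1
    have hu2 : (0:ℝ) < u₀ ^ 2 := by positivity
    field_simp at h1
    linarith
  have hlogu₀ : u₀ - 1 = 2 * Real.log u₀ := by
    have := congrArg Real.log key₀
    rwa [Real.log_exp, Real.log_pow, Nat.cast_ofNat] at this
  -- t₀ value
  have hy : x₀ ^ 2 / Real.exp 1 = Real.exp (1 - 2 * u₀) := by
    rw [hx₀exp, sq, ← Real.exp_add, ← Real.exp_sub]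
    ring_nf
  have ht₀val : t₀ = Real.exp (2 * u₀ - 1) / (2 * u₀) ^ 2 := by
    rw [ht₀, hy, f_exp, show (2 * u₀ - 1 : ℝ) = 2 * u₀ - 1 by ring]
  have hexp2u₀ : Real.exp (2 * u₀ - 1) = Real.exp 1 * u₀ ^ 4 := by
    have : Real.exp (2 * u₀ - 1) = Real.exp (u₀ - 1) * Real.exp (u₀ - 1) * Real.exp 1 := by
      rw [← Real.exp_add, ← Real.exp_add]; ring_nf
    rw [this, key₀]; ring
  have ht₀val2 : t₀ = Real.exp 1 * u₀ ^ 2 / 4 := by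
    rw [ht₀val, hexp2u₀]
    have : (2 * u₀) ^ 2 = 4 * u₀ ^ 2 := by ring
    rw [this]
    field_simp
  have ht₀1 : 1 < t₀ := by
    rw [ht₀val2]
    nlinarith
  have ht0pos : (0:ℝ) < t₀ := by linarith
  have htpos : (0:ℝ) < t := by linarith
  obtain ⟨⟨hx0, hxe⟩, hfx⟩ := hfinv t (by linarith)
  set x : ℝ := finv t with hxdef
  have hlogx : Real.log x < -1 := by
    have := Real.log_lt_log hx0 hxe
    rwa [Real.log_inv, Real.log_exp] at this
  set u : ℝ := 1 - Real.log x with hudef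
  have hu2 : 2 < u := by rw [hudef]; linarith
  have hu0 : 0 < u := by linarith
  have hxexp : x = Real.exp (1 - u) := by
    rw [show (1 - u : ℝ) = Real.log x by rw [hudef]; ring, Real.exp_log hx0]
  have htval : t = Real.exp (u - 1) / u ^ 2 := by
    rw [← hfx, hxexp, f_exp]
  -- log of t and t₀
  have hlogt : Real.log t = (u - 1) - 2 * Real.log u := by
    rw [htval, Real.log_div (Real.exp_ne_zero _) (by positivity), Real.log_exp, Real.log_pow,
      Nat.cast_ofNat]
  have hlogt₀ : Real.log t₀ = (2 * u₀ - 1) - 2 * Real.log (2 * u₀) := by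
    rw [ht₀val, Real.log_div (Real.exp_ne_zero _) (by positivity), Real.log_exp, Real.log_pow,
      Nat.cast_ofNat]
  have hloglt : Real.log t₀ < Real.log t := Real.log_lt_log ht0pos ht
  -- from monotonicity of v - 2 log v deduce u > 2 u₀
  have hugt : 2 * u₀ < u := by
    by_contra h
    push_neg at h
    have hm := (psi_mono 2 (by norm_num)).monotoneOn
      (by simp only [Set.mem_Ici]; linarith) (by simp only [Set.mem_Ici]; linarith) h
    rw [hlogt, hlogt₀] at hloglt
    linarith
  -- apply monotonicity of v - 4 log v
  have h4 := psi_mono 4 (by norm_num)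
    (Set.mem_Ici.mpr (by linarith : (4:ℝ) ≤ 2 * u₀))
    (Set.mem_Ici.mpr (by linarith : (4:ℝ) ≤ u)) hugt
  simp only at h4
  have hlog2u₀ : Real.log (2 * u₀) = Real.log 2 + Real.log u₀ :=
    Real.log_mul two_ne_zero hu₀0.ne'
  have hpsi : 2 - 4 * Real.log 2 < u - 4 * Real.log u := by
    rw [hlog2u₀] at h4
    linarith
  -- conclude
  have hRHSpos : (0:ℝ) < Real.exp 1 / (16 * t ^ 2) := by positivity
  have hlogRHS : Real.log (Real.exp 1 / (16 * t ^ 2)) =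
      1 - (4 * Real.log 2 + 2 * Real.log t) := by
    rw [Real.log_div (Real.exp_ne_zero _) (by positivity), Real.log_exp,
      Real.log_mul (by norm_num) (by positivity), Real.log_pow, Nat.cast_ofNat,
      show (16:ℝ) = 2 ^ 4 by norm_num, Real.log_pow, Nat.cast_ofNat]
  have hfinal : Real.log (Real.exp 1 / (16 * t ^ 2)) < 1 - u := by
    rw [hlogRHS, hlogt]
    linarith
  calc Real.exp 1 / (16 * t ^ 2)
      = Real.exp (Real.log (Real.exp 1 / (16 * t ^ 2))) := (Real.exp_log hRHSpos).symm
    _ < Real.exp (1 - u) := Real.exp_lt_exp.mpr hfinal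
    _ = x := hxexp.symm
end
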